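/- (Theorem 4, regret of DOPA with Fréchet ambiguity sets.) Let K ≥ 1 and let F : ℝ → ℝ be a marginal generator with F(s) > 0 for all s in its domain (so that the marginal CDFs F_k(s) = min{1, max{0, 1 − F(−s/η)}} satisfy F_k(s) < 1 for all s ∈ ℝ). Fix η > 0 and suppose there exist γ ∈ (1,2) and C > 0 such that F'(F^{-1}(p)) ≤ C p^γ for all p ∈ (0,1). Let f(s) = ∫_0^s F^{-1}(t) dt for s ∈ [0,1], and for u ∈ ℝ^K let p(u) ∈ Δ^K be the unique maximizer of max_{p ∈ Δ^K} [ Σ_{k=1}^K u_k p_k − η Σ_{k=1}^K f(p_k) ] (which is componentwise strictly positive). Then for every horizon T ≥ 1 and every deterministic non-oblivious adversary, the regret of the learner in the bandit protocol run with the arm-sampling map p(·) satisfies R(T) ≤ −η·K·f(1/K) + C·T·K^{2−γ}/(2η). -/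

import Mathlib

open Set Filter MeasureTheory

noncomputable def simplex (K : ℕ) : Set (Fin K → ℝ) :=
  {p | (∀ k, 0 ≤ p k) ∧ ∑ k, p k = 1}

noncomputable def quantile (F : ℝ → ℝ) (s : ℝ) : ℝ := sInf {t | s ≤ F t}

/- Histories of chosen arms are recorded as lists in reverse chronological order:
the head of the list is the most recently chosen arm.  A deterministic non-oblivious
adversary is a function `r : List (Fin K) → Fin K → ℝ` assigning a reward vector
to each history of previously chosen arms. -/

/-- Cumulative importance-weighted reward estimate `û` after the history `h`. -/
noncomputable def uhat {K : ℕ} (r : List (Fin K) → Fin K → ℝ)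
    (p : (Fin K → ℝ) → (Fin K → ℝ)) : List (Fin K) → Fin K → ℝ
  | [] => fun _ => 0
  | a :: h => fun k =>
      uhat r p h k + (if k = a then r h a / p (uhat r p h) a else 0)

/-- Probability that the learner produces the history `h`. -/
noncomputable def histProb {K : ℕ} (r : List (Fin K) → Fin K → ℝ)
    (p : (Fin K → ℝ) → (Fin K → ℝ)) : List (Fin K) → ℝ
  | [] => 1
  | a :: h => histProb r p h * p (uhat r p h) a

/-- Total reward collected by the learner along the history `h`. -/
noncomputable def cumReward {K : ℕ} (r : List (Fin K) → Fin K → ℝ) :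
    List (Fin K) → ℝ
  | [] => 0
  | a :: h => cumReward r h + r h a

/-- Total reward that arm `k` would have collected along the history `h`. -/
noncomputable def cumArm {K : ℕ} (r : List (Fin K) → Fin K → ℝ) (k : Fin K) :
    List (Fin K) → ℝ
  | [] => 0
  | _ :: h => cumArm r k h + r h k

/-- The regret `R(T) = max_k E[∑_t r_{t,k}] − E[∑_t r_{t,a_t}]`. -/
noncomputable def regret (K T : ℕ) (r : List (Fin K) → Fin K → ℝ)
    (p : (Fin K → ℝ) → (Fin K → ℝ)) : ℝ :=
  (⨆ k : Fin K, ∑ f : Fin T → Fin K,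
      histProb r p (List.ofFn f).reverse * cumArm r k (List.ofFn f).reverse) -
    ∑ f : Fin T → Fin K,
      histProb r p (List.ofFn f).reverse * cumReward r (List.ofFn f).reverse

section QAux
variable {F : ℝ → ℝ}

lemma aux_qleft (hFmono : StrictMono F) (t : ℝ) : quantile F (F t) = t := by
  unfold quantile
  have : {s | F t ≤ F s} = Ici t := by
    ext s; simp [hFmono.le_iff_le]
  rw [this, csInf_Ici]

lemma aux_qright (hFmono : StrictMono F) (hFcont : Continuous F)
    (hFbot : ∀ ε > (0:ℝ), ∃ s, F s < ε) (hFtop : ∀ ε > (0:ℝ), ∃ s, 1 - ε < F s)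
    {q : ℝ} (hq : q ∈ Ioo (0:ℝ) 1) : F (quantile F q) = q := by
  obtain ⟨hq0, hq1⟩ := hq
  have hne : {t | q ≤ F t}.Nonempty := by
    obtain ⟨s, hs⟩ := hFtop (1 - q) (by linarith)
    exact ⟨s, by simpa using le_of_lt (by linarith)⟩
  obtain ⟨s0, hs0⟩ := hFbot q hq0
  have hbdd : BddBelow {t | q ≤ F t} := by
    refine ⟨s0, fun t ht => ?_⟩
    by_contra hlt
    push_neg at hlt
    exact absurd (lt_of_le_of_lt ht.out (lt_of_le_of_lt (hFmono.le_iff_le.2 hlt.le) hs0)) (lt_irrefl _)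
  have hclosed : IsClosed {t | q ≤ F t} := isClosed_le continuous_const hFcont
  have hmem : quantile F q ∈ {t | q ≤ F t} := hclosed.csInf_mem hne hbdd
  refine le_antisymm ?_ hmem
  by_contra hlt
  push_neg at hlt
  obtain ⟨δ, hδ, hball⟩ := Metric.continuousAt_iff.mp (hFcont.continuousAt : ContinuousAt F (quantile F q)) (F (quantile F q) - q) (by linarith)
  have hmem2 : quantile F q - δ / 2 ∈ {t | q ≤ F t} := by
    have := hball (x := quantile F q - δ/2) (by rw [Real.dist_eq]; rw [abs_lt]; constructor <;> linarith)
    rw [Real.dist_eq, abs_lt] at this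
    simp only [mem_setOf_eq]
    linarith [this.1]
  have := csInf_le hbdd hmem2
  unfold quantile at this
  linarith

lemma aux_qmono (hFmono : StrictMono F) (hFcont : Continuous F)
    (hFbot : ∀ ε > (0:ℝ), ∃ s, F s < ε) (hFtop : ∀ ε > (0:ℝ), ∃ s, 1 - ε < F s)
    {x y : ℝ} (hy : y ∈ Ioo (0:ℝ) 1) (hx : x ∈ Ioo (0:ℝ) 1) (h : y < x) :
    quantile F y < quantile F x := by
  by_contra hle
  push_neg at hle
  have := hFmono.le_iff_le.2 hle
  rw [aux_qright hFmono hFcont hFbot hFtop hx, aux_qright hFmono hFcont hFbot hFtop hy] at this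
  linarith

lemma aux_qcont (hFmono : StrictMono F) (hFcont : Continuous F)
    (hFbot : ∀ ε > (0:ℝ), ∃ s, F s < ε) (hFtop : ∀ ε > (0:ℝ), ∃ s, 1 - ε < F s)
    {q : ℝ} (hq : q ∈ Ioo (0:ℝ) 1) : ContinuousAt (quantile F) q := by
  rw [Metric.continuousAt_iff]
  intro ε hε
  have hFQ : F (quantile F q) = q := aux_qright hFmono hFcont hFbot hFtop hq
  have h1 : F (quantile F q - ε/2) < q := by
    have := hFmono (show quantile F q - ε/2 < quantile F q by linarith)
    rwa [hFQ] at this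
  have h2 : q < F (quantile F q + ε/2) := by
    have := hFmono (show quantile F q < quantile F q + ε/2 by linarith)
    rwa [hFQ] at this
  have hq0 := hq.1; have hq1 := hq.2
  refine ⟨min (min (q - F (quantile F q - ε/2)) (F (quantile F q + ε/2) - q)) (min (q/2) ((1-q)/2)),
    lt_min (lt_min (by linarith) (by linarith)) (lt_min (by linarith) (by linarith)), ?_⟩
  intro x hx
  rw [Real.dist_eq] at hx
  have hA := (abs_lt.1 (lt_of_lt_of_le hx (min_le_left _ _))).1
  have hB := (abs_lt.1 (lt_of_lt_of_le hx (min_le_left _ _))).2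
  have hC := (abs_lt.1 (lt_of_lt_of_le hx (min_le_right _ _))).1
  have hD := (abs_lt.1 (lt_of_lt_of_le hx (min_le_right _ _))).2
  have m1 := min_le_left (q - F (quantile F q - ε/2)) (F (quantile F q + ε/2) - q)
  have m2 := min_le_right (q - F (quantile F q - ε/2)) (F (quantile F q + ε/2) - q)
  have m3 := min_le_left (q/2) ((1-q)/2)
  have m4 := min_le_right (q/2) ((1-q)/2)
  have hx1 : F (quantile F q - ε/2) < x := by linarith
  have hx2 : x < F (quantile F q + ε/2) := by linarith
  have hxIoo : x ∈ Ioo (0:ℝ) 1 := ⟨by linarith, by linarith⟩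
  have hQx : F (quantile F x) = x := aux_qright hFmono hFcont hFbot hFtop hxIoo
  have hlow : quantile F q - ε/2 < quantile F x := by
    by_contra hle; push_neg at hle
    have := hFmono.le_iff_le.2 hle
    rw [hQx] at this; linarith
  have hhigh : quantile F x < quantile F q + ε/2 := by
    by_contra hle; push_neg at hle
    have := hFmono.le_iff_le.2 hle
    rw [hQx] at this; linarith
  rw [Real.dist_eq, abs_lt]
  constructor <;> linarith
end QAux

section Growth
variable {F F' : ℝ → ℝ} {C γ : ℝ}

lemma aux_qgrowth (hFmono : StrictMono F) (hFcont : Continuous F)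
    (hFbot : ∀ ε > (0:ℝ), ∃ s, F s < ε) (hFtop : ∀ ε > (0:ℝ), ∃ s, 1 - ε < F s)
    (hFderiv : ∀ s, HasDerivAt F (F' s) s) (hC : 0 < C) (hγ0 : 0 ≤ γ)
    (hgrowth : ∀ q ∈ Ioo (0:ℝ) 1, F' (quantile F q) ≤ C * q ^ γ)
    {x y : ℝ} (hy0 : 0 < y) (hyx : y < x) (hx1 : x < 1) :
    x - y ≤ C * x ^ γ * (quantile F x - quantile F y) := by
  have hxI : x ∈ Ioo (0:ℝ) 1 := ⟨lt_trans hy0 hyx, hx1⟩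
  have hyI : y ∈ Ioo (0:ℝ) 1 := ⟨hy0, lt_trans hyx hx1⟩
  have hQ : quantile F y < quantile F x := aux_qmono hFmono hFcont hFbot hFtop hyI hxI hyx
  obtain ⟨ξ, hξ, hslope⟩ := exists_hasDerivAt_eq_slope F F' hQ
    (hFcont.continuousOn) (fun s _ => hFderiv s)
  have hFx : F (quantile F x) = x := aux_qright hFmono hFcont hFbot hFtop hxI
  have hFy : F (quantile F y) = y := aux_qright hFmono hFcont hFbot hFtop hyI
  rw [hFx, hFy] at hslope
  have hFξy : y < F ξ := by rw [← hFy]; exact hFmono hξ.1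
  have hFξx : F ξ < x := by rw [← hFx]; exact hFmono hξ.2
  have hξI : F ξ ∈ Ioo (0:ℝ) 1 := ⟨lt_trans hy0 hFξy, lt_trans hFξx hx1⟩
  have hgr := hgrowth (F ξ) hξI
  rw [aux_qleft hFmono ξ] at hgr
  have hpow : C * (F ξ) ^ γ ≤ C * x ^ γ := by
    have := Real.rpow_le_rpow (le_of_lt hξI.1) (le_of_lt hFξx) hγ0
    nlinarith
  have hden : (0:ℝ) < quantile F x - quantile F y := by linarith
  rw [hslope] at hgr
  have : (x - y) / (quantile F x - quantile F y) ≤ C * x ^ γ := le_trans hgr hpow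
  calc x - y = ((x - y) / (quantile F x - quantile F y)) * (quantile F x - quantile F y) := by
        field_simp
    _ ≤ C * x ^ γ * (quantile F x - quantile F y) := by
        apply mul_le_mul_of_nonneg_right this (le_of_lt hden)
end Growth

section FAux
variable {F f : ℝ → ℝ}

lemma aux_fderiv (hFmono : StrictMono F) (hFcont : Continuous F)
    (hFbot : ∀ ε > (0:ℝ), ∃ s, F s < ε) (hFtop : ∀ ε > (0:ℝ), ∃ s, 1 - ε < F s)
    (hFint : IntegrableOn (quantile F) (Ioo (0:ℝ) 1))
    (hf : ∀ s ∈ Icc (0:ℝ) 1, f s = ∫ t in (0:ℝ)..s, quantile F t)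
    {s : ℝ} (hs : s ∈ Ioo (0:ℝ) 1) :
    HasDerivAt f (quantile F s) s := by
  have hint : IntervalIntegrable (quantile F) volume 0 s := by
    rw [intervalIntegrable_iff_integrableOn_Ioc_of_le (le_of_lt hs.1)]
    exact hFint.mono_set (fun t ht => ⟨ht.1, lt_of_le_of_lt ht.2 hs.2⟩)
  have hcontOn : ∀ x ∈ Ioo (0:ℝ) 1, ContinuousAt (quantile F) x :=
    fun x hx => aux_qcont hFmono hFcont hFbot hFtop hx
  have hmeas : StronglyMeasurableAtFilter (quantile F) (nhds s) volume :=
    ContinuousAt.stronglyMeasurableAtFilter isOpen_Ioo hcontOn s hs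
  have hg : HasDerivAt (fun u => ∫ t in (0:ℝ)..u, quantile F t) (quantile F s) s :=
    intervalIntegral.integral_hasDerivAt_right hint hmeas (hcontOn s hs)
  apply hg.congr_of_eventuallyEq
  filter_upwards [isOpen_Ioo.mem_nhds hs] with x hx
  exact hf x ⟨le_of_lt hx.1, le_of_lt hx.2⟩

lemma aux_fconvex (hFmono : StrictMono F) (hFcont : Continuous F)
    (hFbot : ∀ ε > (0:ℝ), ∃ s, F s < ε) (hFtop : ∀ ε > (0:ℝ), ∃ s, 1 - ε < F s)
    (hFint : IntegrableOn (quantile F) (Ioo (0:ℝ) 1))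
    (hf : ∀ s ∈ Icc (0:ℝ) 1, f s = ∫ t in (0:ℝ)..s, quantile F t) :
    ConvexOn ℝ (Ioo (0:ℝ) 1) f := by
  have hD : ∀ s ∈ Ioo (0:ℝ) 1, HasDerivAt f (quantile F s) s :=
    fun s hs => aux_fderiv hFmono hFcont hFbot hFtop hFint hf hs
  have hInt : interior (Ioo (0:ℝ) 1) = Ioo (0:ℝ) 1 := isOpen_Ioo.interior_eq
  refine MonotoneOn.convexOn_of_deriv (convex_Ioo _ _) ?_ ?_ ?_
  · exact fun s hs => ((hD s hs).continuousAt).continuousWithinAt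
  · rw [hInt]; exact fun s hs => ((hD s hs).differentiableAt).differentiableWithinAt
  · rw [hInt]
    intro a ha b hb hab
    rw [(hD a ha).deriv, (hD b hb).deriv]
    rcases eq_or_lt_of_le hab with rfl | h
    · exact le_rfl
    · exact le_of_lt (aux_qmono hFmono hFcont hFbot hFtop ha hb h)
end FAux
section Comb
variable {K : ℕ} (r : List (Fin K) → Fin K → ℝ) (p : (Fin K → ℝ) → (Fin K → ℝ))

def snocEquiv (K T : ℕ) : (Fin (T+1) → Fin K) ≃ (Fin T → Fin K) × Fin K where
  toFun f := (fun i => f i.castSucc, f (Fin.last T))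
  invFun x := Fin.snoc x.1 x.2
  left_inv f := Fin.snoc_init_self f
  right_inv x := by
    obtain ⟨g, a⟩ := x
    refine Prod.ext (funext fun i => ?_) ?_ <;> simp

lemma ofFn_snoc_reverse {K T : ℕ} (g : Fin T → Fin K) (a : Fin K) :
    (List.ofFn (Fin.snoc g a : Fin (T+1) → Fin K)).reverse = a :: (List.ofFn g).reverse := by
  rw [List.ofFn_succ']
  have h1 : (Fin.snoc g a : Fin (T+1) → Fin K) (Fin.last T) = a := Fin.snoc_last _ _
  have h2 : (fun i => (Fin.snoc g a : Fin (T+1) → Fin K) i.castSucc) = g := by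
    funext i; exact Fin.snoc_castSucc _ _ _
  rw [h1, h2, List.concat_eq_append, List.reverse_append]
  rfl

lemma aux_sum_snoc {K T : ℕ} (G : List (Fin K) → ℝ) :
    ∑ f : Fin (T+1) → Fin K, G (List.ofFn f).reverse
      = ∑ g : Fin T → Fin K, ∑ a : Fin K, G (a :: (List.ofFn g).reverse) := by
  rw [← Equiv.sum_comp (snocEquiv K T).symm (fun f => G (List.ofFn f).reverse)]
  rw [Fintype.sum_prod_type]
  refine Finset.sum_congr rfl fun g _ => Finset.sum_congr rfl fun a _ => ?_
  have : (snocEquiv K T).symm (g, a) = Fin.snoc g a := rfl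
  rw [this, ofFn_snoc_reverse]

lemma aux_histProb_nonneg (hpos : ∀ u a, 0 ≤ p u a) :
    ∀ h, 0 ≤ histProb r p h
  | [] => by simp [histProb]
  | a :: h => mul_nonneg (aux_histProb_nonneg hpos h) (hpos _ a)

lemma aux_sum_histProb (hpos : ∀ u a, 0 ≤ p u a) (hsum : ∀ u, ∑ a, p u a = 1) :
    ∀ T, ∑ f : Fin T → Fin K, histProb r p (List.ofFn f).reverse = 1 := by
  intro T
  induction T with
  | zero => simp [histProb]
  | succ T IH =>
    rw [aux_sum_snoc]
    have : ∀ g : Fin T → Fin K,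
        ∑ a : Fin K, histProb r p (a :: (List.ofFn g).reverse)
          = histProb r p (List.ofFn g).reverse := by
      intro g
      simp only [histProb]
      rw [← Finset.mul_sum, hsum, mul_one]
    rw [Finset.sum_congr rfl fun g _ => this g, IH]

lemma aux_unbiased (hsum : ∀ u, ∑ a, p u a = 1)
    (hne : ∀ u a, p u a ≠ 0) (k : Fin K) :
    ∀ T, ∑ f : Fin T → Fin K,
        histProb r p (List.ofFn f).reverse * cumArm r k (List.ofFn f).reverse
      = ∑ f : Fin T → Fin K,
        histProb r p (List.ofFn f).reverse * uhat r p (List.ofFn f).reverse k := by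
  intro T
  induction T with
  | zero => simp [cumArm, uhat]
  | succ T IH =>
    have e1 : (∑ f : Fin (T+1) → Fin K,
        histProb r p (List.ofFn f).reverse * cumArm r k (List.ofFn f).reverse)
        = ∑ g : Fin T → Fin K, ∑ a : Fin K,
          histProb r p (a :: (List.ofFn g).reverse) * cumArm r k (a :: (List.ofFn g).reverse) :=
      aux_sum_snoc (fun h => histProb r p h * cumArm r k h)
    have e2 : (∑ f : Fin (T+1) → Fin K,
        histProb r p (List.ofFn f).reverse * uhat r p (List.ofFn f).reverse k)
        = ∑ g : Fin T → Fin K, ∑ a : Fin K,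
          histProb r p (a :: (List.ofFn g).reverse) * uhat r p (a :: (List.ofFn g).reverse) k :=
      aux_sum_snoc (fun h => histProb r p h * uhat r p h k)
    rw [e1, e2]
    have hL : ∀ g : Fin T → Fin K,
        ∑ a : Fin K, histProb r p (a :: (List.ofFn g).reverse)
            * cumArm r k (a :: (List.ofFn g).reverse)
          = histProb r p (List.ofFn g).reverse * cumArm r k (List.ofFn g).reverse
            + histProb r p (List.ofFn g).reverse * r (List.ofFn g).reverse k := by
      intro g
      set h := (List.ofFn g).reverse with hh
      simp only [histProb, cumArm]
      have : ∀ a : Fin K, histProb r p h * p (uhat r p h) a * (cumArm r k h + r h k)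
          = (histProb r p h * (cumArm r k h + r h k)) * p (uhat r p h) a := fun a => by ring
      rw [Finset.sum_congr rfl (fun a _ => this a), ← Finset.mul_sum, hsum, mul_one]
      ring
    have hR : ∀ g : Fin T → Fin K,
        ∑ a : Fin K, histProb r p (a :: (List.ofFn g).reverse)
            * uhat r p (a :: (List.ofFn g).reverse) k
          = histProb r p (List.ofFn g).reverse * uhat r p (List.ofFn g).reverse k
            + histProb r p (List.ofFn g).reverse * r (List.ofFn g).reverse k := by
      intro g
      set h := (List.ofFn g).reverse with hh
      simp only [histProb, uhat]
      have step : ∀ a : Fin K, histProb r p h * p (uhat r p h) a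
            * (uhat r p h k + if k = a then r h a / p (uhat r p h) a else 0)
          = (histProb r p h * uhat r p h k) * p (uhat r p h) a
            + (if k = a then histProb r p h * (p (uhat r p h) a * (r h a / p (uhat r p h) a)) else 0) := by
        intro a; split <;> ring
      rw [Finset.sum_congr rfl (fun a _ => step a), Finset.sum_add_distrib,
        ← Finset.mul_sum, hsum, mul_one, Finset.sum_ite_eq]
      simp only [Finset.mem_univ, if_true]
      rw [mul_comm (p (uhat r p h) k), div_mul_cancel₀ _ (hne _ k)]
    rw [Finset.sum_congr rfl (fun g _ => hL g), Finset.sum_congr rfl (fun g _ => hR g),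
      Finset.sum_add_distrib, Finset.sum_add_distrib, IH]

lemma aux_exp_bound (Φ : (Fin K → ℝ) → ℝ) (c : ℝ)
    (hpos : ∀ u a, 0 ≤ p u a) (hsum : ∀ u, ∑ a, p u a = 1)
    (hstep : ∀ h : List (Fin K),
      ∑ a : Fin K, p (uhat r p h) a * (Φ (uhat r p (a :: h)) - cumReward r (a :: h))
        ≤ (Φ (uhat r p h) - cumReward r h) + c) :
    ∀ T, ∑ f : Fin T → Fin K,
        histProb r p (List.ofFn f).reverse
          * (Φ (uhat r p (List.ofFn f).reverse) - cumReward r (List.ofFn f).reverse)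
      ≤ Φ (fun _ => 0) + T * c := by
  intro T
  induction T with
  | zero => simp [uhat, cumReward, histProb]
  | succ T IH =>
    have e1 : (∑ f : Fin (T+1) → Fin K,
        histProb r p (List.ofFn f).reverse
          * (Φ (uhat r p (List.ofFn f).reverse) - cumReward r (List.ofFn f).reverse))
        = ∑ g : Fin T → Fin K, ∑ a : Fin K,
          histProb r p (a :: (List.ofFn g).reverse)
            * (Φ (uhat r p (a :: (List.ofFn g).reverse))
              - cumReward r (a :: (List.ofFn g).reverse)) :=
      aux_sum_snoc (fun h => histProb r p h * (Φ (uhat r p h) - cumReward r h))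
    rw [e1]
    have key : ∀ g : Fin T → Fin K,
        ∑ a : Fin K, histProb r p (a :: (List.ofFn g).reverse)
            * (Φ (uhat r p (a :: (List.ofFn g).reverse))
              - cumReward r (a :: (List.ofFn g).reverse))
          ≤ histProb r p (List.ofFn g).reverse
            * ((Φ (uhat r p (List.ofFn g).reverse)
              - cumReward r (List.ofFn g).reverse) + c) := by
      intro g
      set h := (List.ofFn g).reverse with hh
      have expand : ∀ a : Fin K, histProb r p (a :: h)
            * (Φ (uhat r p (a :: h)) - cumReward r (a :: h))
          = histProb r p h * (p (uhat r p h) a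
              * (Φ (uhat r p (a :: h)) - cumReward r (a :: h))) := by
        intro a; simp only [histProb]; ring
      rw [Finset.sum_congr rfl (fun a _ => expand a), ← Finset.mul_sum]
      exact mul_le_mul_of_nonneg_left (hstep h) (aux_histProb_nonneg r p hpos h)
    calc ∑ g : Fin T → Fin K, ∑ a : Fin K,
            histProb r p (a :: (List.ofFn g).reverse)
              * (Φ (uhat r p (a :: (List.ofFn g).reverse))
                - cumReward r (a :: (List.ofFn g).reverse))
        ≤ ∑ g : Fin T → Fin K, histProb r p (List.ofFn g).reverse
            * ((Φ (uhat r p (List.ofFn g).reverse)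
              - cumReward r (List.ofFn g).reverse) + c) :=
          Finset.sum_le_sum fun g _ => key g
      _ = (∑ g : Fin T → Fin K, histProb r p (List.ofFn g).reverse
            * (Φ (uhat r p (List.ofFn g).reverse) - cumReward r (List.ofFn g).reverse))
          + c * ∑ g : Fin T → Fin K, histProb r p (List.ofFn g).reverse := by
          rw [Finset.mul_sum, ← Finset.sum_add_distrib]
          exact Finset.sum_congr rfl fun g _ => by ring
      _ ≤ Φ (fun _ => 0) + T * c + c * 1 := by
          rw [aux_sum_histProb r p hpos hsum]
          linarith [IH]
      _ = Φ (fun _ => 0) + (T + 1 : ℕ) * c := by push_cast; ring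
end Comb
noncomputable def PhiF {K : ℕ} (η : ℝ) (f : ℝ → ℝ) (p : (Fin K → ℝ) → Fin K → ℝ)
    (u : Fin K → ℝ) : ℝ := ∑ k, u k * p u k - η * ∑ k, f (p u k)

noncomputable def upd {K : ℕ} (u : Fin K → ℝ) (a : Fin K) (s : ℝ) : Fin K → ℝ :=
  fun k => u k + if k = a then s else 0

section PhiAux
variable {K : ℕ} {η C γ : ℝ} {F F' f : ℝ → ℝ} {p : (Fin K → ℝ) → Fin K → ℝ}

lemma aux_phi_ge
    (hp : ∀ u, p u ∈ simplex K ∧ (∀ k, 0 < p u k) ∧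
      IsMaxOn (fun q => ∑ k, u k * q k - η * ∑ k, f (q k)) (simplex K) (p u) ∧
      ∀ q ∈ simplex K,
        IsMaxOn (fun q' => ∑ k, u k * q' k - η * ∑ k, f (q' k)) (simplex K) q → q = p u)
    (u : Fin K → ℝ) {q : Fin K → ℝ} (hq : q ∈ simplex K) :
    ∑ k, u k * q k - η * ∑ k, f (q k) ≤ PhiF η f p u :=
  isMaxOn_iff.mp (hp u).2.2.1 q hq

lemma aux_sum_upd (u : Fin K → ℝ) (a : Fin K) (t : ℝ) (q : Fin K → ℝ) :
    ∑ k, upd u a t k * q k = (∑ k, u k * q k) + t * q a := by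
  unfold upd
  have e : ∀ k : Fin K, (u k + if k = a then t else 0) * q k
      = u k * q k + (if k = a then t * q k else 0) := fun k => by split <;> ring
  rw [Finset.sum_congr rfl fun k _ => e k, Finset.sum_add_distrib, Finset.sum_ite_eq']
  simp

lemma aux_phi_subgrad
    (hp : ∀ u, p u ∈ simplex K ∧ (∀ k, 0 < p u k) ∧
      IsMaxOn (fun q => ∑ k, u k * q k - η * ∑ k, f (q k)) (simplex K) (p u) ∧
      ∀ q ∈ simplex K,
        IsMaxOn (fun q' => ∑ k, u k * q' k - η * ∑ k, f (q' k)) (simplex K) q → q = p u)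
    (u : Fin K → ℝ) (a : Fin K) (s s' : ℝ) :
    PhiF η f p (upd u a s) + (s' - s) * p (upd u a s) a ≤ PhiF η f p (upd u a s') := by
  have hq := (hp (upd u a s)).1
  have h := aux_phi_ge hp (upd u a s') hq
  rw [aux_sum_upd] at h
  have h2 : PhiF η f p (upd u a s)
      = (∑ k, u k * p (upd u a s) k) + s * p (upd u a s) a
        - η * ∑ k, f (p (upd u a s) k) := by
    unfold PhiF; rw [aux_sum_upd]
  rw [h2]; linarith

lemma aux_pmono
    (hp : ∀ u, p u ∈ simplex K ∧ (∀ k, 0 < p u k) ∧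
      IsMaxOn (fun q => ∑ k, u k * q k - η * ∑ k, f (q k)) (simplex K) (p u) ∧
      ∀ q ∈ simplex K,
        IsMaxOn (fun q' => ∑ k, u k * q' k - η * ∑ k, f (q' k)) (simplex K) q → q = p u)
    (u : Fin K → ℝ) (a : Fin K) {s s' : ℝ} (h : s ≤ s') :
    p (upd u a s) a ≤ p (upd u a s') a := by
  rcases eq_or_lt_of_le h with rfl | hlt
  · exact le_rfl
  · have h1 := aux_phi_subgrad hp u a s s'
    have h2 := aux_phi_subgrad hp u a s' s
    nlinarith

lemma aux_p_lt_one
    (hp : ∀ u, p u ∈ simplex K ∧ (∀ k, 0 < p u k) ∧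
      IsMaxOn (fun q => ∑ k, u k * q k - η * ∑ k, f (q k)) (simplex K) (p u) ∧
      ∀ q ∈ simplex K,
        IsMaxOn (fun q' => ∑ k, u k * q' k - η * ∑ k, f (q' k)) (simplex K) q → q = p u)
    (u : Fin K → ℝ) {i j : Fin K} (hij : i ≠ j) (k : Fin K) : p u k < 1 := by
  obtain ⟨⟨hpos0, hsum⟩, hpos, _, _⟩ := hp u
  set m : Fin K := if k = i then j else i with hm
  have hmk : m ≠ k := by
    rcases eq_or_ne k i with h | h
    · rw [hm, if_pos h]; subst h; exact fun hc => hij hc.symm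
    · rw [hm, if_neg h]; exact fun hc => h hc.symm
  have hsub : ({k, m} : Finset (Fin K)) ⊆ Finset.univ := Finset.subset_univ _
  have hpair : ∑ x ∈ ({k, m} : Finset (Fin K)), p u x = p u k + p u m :=
    Finset.sum_pair (fun hc => hmk hc.symm)
  have hle : ∑ x ∈ ({k, m} : Finset (Fin K)), p u x ≤ ∑ x, p u x :=
    Finset.sum_le_sum_of_subset_of_nonneg hsub (fun x _ _ => hpos0 x)
  rw [hpair, hsum] at hle
  have := hpos m
  linarith
end PhiAux

section KKT
variable {K : ℕ} {η C γ : ℝ} {F f : ℝ → ℝ} {p : (Fin K → ℝ) → Fin K → ℝ}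

lemma aux_kkt (hη : 0 < η)
    (hp : ∀ u, p u ∈ simplex K ∧ (∀ k, 0 < p u k) ∧
      IsMaxOn (fun q => ∑ k, u k * q k - η * ∑ k, f (q k)) (simplex K) (p u) ∧
      ∀ q ∈ simplex K,
        IsMaxOn (fun q' => ∑ k, u k * q' k - η * ∑ k, f (q' k)) (simplex K) q → q = p u)
    (hDf : ∀ s ∈ Ioo (0:ℝ) 1, HasDerivAt f (quantile F s) s)
    (u : Fin K → ℝ) (hlt : ∀ i, p u i < 1) (k j : Fin K) :
    u k - η * quantile F (p u k) = u j - η * quantile F (p u j) := by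
  rcases eq_or_ne k j with rfl | hkj
  · rfl
  set c : Fin K → ℝ := fun i => (if i = k then 1 else 0) - (if i = j then 1 else 0) with hc
  set g : ℝ → ℝ := fun ε => (∑ i, u i * (p u i + c i * ε)) - η * ∑ i, f (p u i + c i * ε)
    with hgdef
  have hpos := (hp u).2.1
  -- derivative of g at 0
  have hinner : ∀ i : Fin K, HasDerivAt (fun ε : ℝ => p u i + c i * ε) (c i) 0 := by
    intro i
    simpa using ((hasDerivAt_id (0:ℝ)).const_mul (c i)).const_add (p u i)
  have houter : ∀ i : Fin K,
      HasDerivAt (fun ε : ℝ => f (p u i + c i * ε)) (quantile F (p u i) * c i) 0 := by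
    intro i
    have hfi := hDf (p u i) ⟨hpos i, hlt i⟩
    have := HasDerivAt.comp (0:ℝ) (by simpa using hfi) (hinner i)
    exact this
  have hterm1 : ∀ i : Fin K,
      HasDerivAt (fun ε : ℝ => u i * (p u i + c i * ε)) (u i * c i) 0 :=
    fun i => (hinner i).const_mul (u i)
  have hg : HasDerivAt g
      ((∑ i, u i * c i) - η * ∑ i, quantile F (p u i) * c i) 0 := by
    refine HasDerivAt.sub ?_ (HasDerivAt.const_mul η ?_)
    · exact HasDerivAt.fun_sum (fun i _ => hterm1 i)
    · exact HasDerivAt.fun_sum (fun i _ => houter i)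
  -- local max of g at 0
  have hmax : IsLocalMax g 0 := by
    have hδ : 0 < min (p u k) (p u j) := lt_min (hpos k) (hpos j)
    have : Metric.ball (0:ℝ) (min (p u k) (p u j)) ∈ nhds (0:ℝ) := Metric.ball_mem_nhds 0 hδ
    refine Filter.eventually_of_mem this ?_
    intro ε hε
    rw [Metric.mem_ball, Real.dist_eq, sub_zero] at hε
    have habs := abs_lt.mp hε
    have hmem : (fun i => p u i + c i * ε) ∈ simplex K := by
      constructor
      · intro i
        show 0 ≤ p u i + c i * ε
        rcases eq_or_ne i k with rfl | hik
        · have hci : c i = 1 := by simp [hc, hkj]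
          rw [hci]
          nlinarith [min_le_left (p u i) (p u j), habs.1, hpos i]
        · rcases eq_or_ne i j with rfl | hij2
          · have hci : c i = -1 := by simp [hc, hik]
            rw [hci]
            nlinarith [min_le_right (p u k) (p u i), habs.2, hpos i]
          · have hci : c i = 0 := by simp [hc, hik, hij2]
            rw [hci]
            simp
            linarith [hpos i]
      · show ∑ i, (p u i + c i * ε) = 1
        have hsum := (hp u).1.2
        have hcsum : ∑ i, c i = 0 := by
          simp only [hc]
          rw [Finset.sum_sub_distrib]
          simp [Finset.sum_ite_eq']
        calc ∑ i, (p u i + c i * ε) = (∑ i, p u i) + (∑ i, c i) * ε := by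
              rw [Finset.sum_add_distrib, Finset.sum_mul]
          _ = 1 := by rw [hsum, hcsum]; ring
    have hg0 : g 0 = PhiF η f p u := by
      rw [hgdef]; unfold PhiF; simp
    have hgε : g ε ≤ g 0 := by
      rw [hg0]
      exact aux_phi_ge hp u hmem
    exact hgε
  have hzero := hmax.hasDerivAt_eq_zero hg
  have hsumc1 : ∑ i, u i * c i = u k - u j := by
    simp only [hc]
    have e : ∀ i : Fin K, u i * ((if i = k then (1:ℝ) else 0) - (if i = j then 1 else 0))
        = (if i = k then u i else 0) - (if i = j then u i else 0) := fun i => by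
      split <;> split <;> ring
    rw [Finset.sum_congr rfl fun i _ => e i, Finset.sum_sub_distrib]
    simp [Finset.sum_ite_eq']
  have hsumc2 : ∑ i, quantile F (p u i) * c i
      = quantile F (p u k) - quantile F (p u j) := by
    simp only [hc]
    have e : ∀ i : Fin K, quantile F (p u i)
          * ((if i = k then (1:ℝ) else 0) - (if i = j then 1 else 0))
        = (if i = k then quantile F (p u i) else 0)
          - (if i = j then quantile F (p u i) else 0) := fun i => by
      split <;> split <;> ring
    rw [Finset.sum_congr rfl fun i _ => e i, Finset.sum_sub_distrib]
    simp [Finset.sum_ite_eq']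
  rw [hsumc1, hsumc2] at hzero
  linarith [hzero]
end KKT

section Stab
variable {K : ℕ} {η C γ : ℝ} {F F' f : ℝ → ℝ} {p : (Fin K → ℝ) → Fin K → ℝ}

lemma aux_stab (hη : 0 < η) (hC : 0 < C) (hγ0 : 0 ≤ γ)
    (hFmono : StrictMono F) (hFcont : Continuous F)
    (hFbot : ∀ ε > (0:ℝ), ∃ s, F s < ε) (hFtop : ∀ ε > (0:ℝ), ∃ s, 1 - ε < F s)
    (hFderiv : ∀ s, HasDerivAt F (F' s) s)
    (hgrowth : ∀ q ∈ Ioo (0:ℝ) 1, F' (quantile F q) ≤ C * q ^ γ)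
    (hp : ∀ u, p u ∈ simplex K ∧ (∀ k, 0 < p u k) ∧
      IsMaxOn (fun q => ∑ k, u k * q k - η * ∑ k, f (q k)) (simplex K) (p u) ∧
      ∀ q ∈ simplex K,
        IsMaxOn (fun q' => ∑ k, u k * q' k - η * ∑ k, f (q' k)) (simplex K) q → q = p u)
    (hDf : ∀ s ∈ Ioo (0:ℝ) 1, HasDerivAt f (quantile F s) s)
    (u : Fin K → ℝ) (a : Fin K) {δ : ℝ} (hδ : 0 ≤ δ) :
    p u a - p (upd u a (-δ)) a ≤ C * (p u a) ^ γ * δ / η := by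
  set u' := upd u a (-δ) with hu'
  have hrpow : (0:ℝ) ≤ C * (p u a) ^ γ * δ / η := by
    have := Real.rpow_nonneg (le_of_lt ((hp u).2.1 a)) γ
    positivity
  rcases le_or_gt (p u a) (p u' a) with hle | hgt
  · linarith
  -- find k ≠ a with p u k < p u' k
  have hsum1 : ∑ i, p u i = 1 := (hp u).1.2
  have hsum2 : ∑ i, p u' i = 1 := (hp u').1.2
  obtain ⟨k, hka, hk⟩ : ∃ k, k ≠ a ∧ p u k < p u' k := by
    by_contra hno
    push_neg at hno
    have hlt : ∑ i, p u' i < ∑ i, p u i := by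
      refine Finset.sum_lt_sum (fun i _ => ?_) ⟨a, Finset.mem_univ a, hgt⟩
      rcases eq_or_ne i a with rfl | hia
      · exact le_of_lt hgt
      · exact hno i hia
    rw [hsum1, hsum2] at hlt
    exact absurd hlt (lt_irrefl _)
  have hlt1 : ∀ i, p u i < 1 := aux_p_lt_one hp u hka
  have hlt2 : ∀ i, p u' i < 1 := aux_p_lt_one hp u' hka
  have hpos1 := (hp u).2.1
  have hpos2 := (hp u').2.1
  -- KKT at u and u'
  have hk1 := aux_kkt hη hp hDf u hlt1 a k
  have hk2 := aux_kkt hη hp hDf u' hlt2 a k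
  have hua : u' a = u a - δ := by simp [hu', upd, sub_eq_add_neg]
  have huk : u' k = u k := by simp [hu', upd, hka]
  rw [hua, huk] at hk2
  -- quantile monotonicity at k
  have hQk : quantile F (p u k) < quantile F (p u' k) :=
    aux_qmono hFmono hFcont hFbot hFtop ⟨hpos1 k, hlt1 k⟩ ⟨hpos2 k, hlt2 k⟩ hk
  have hQa : quantile F (p u a) - quantile F (p u' a) ≤ δ / η := by
    have hx : 0 < η * (quantile F (p u' k) - quantile F (p u k)) :=
      mul_pos hη (by linarith)
    rw [le_div_iff₀ hη]
    nlinarith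
  have hgr := aux_qgrowth hFmono hFcont hFbot hFtop hFderiv hC hγ0 hgrowth
    (hpos2 a) hgt (hlt1 a)
  have hCx : (0:ℝ) ≤ C * (p u a) ^ γ := by
    have := Real.rpow_nonneg (le_of_lt (hpos1 a)) γ
    positivity
  calc p u a - p u' a ≤ C * (p u a) ^ γ * (quantile F (p u a) - quantile F (p u' a)) := hgr
    _ ≤ C * (p u a) ^ γ * (δ / η) := mul_le_mul_of_nonneg_left hQa hCx
    _ = C * (p u a) ^ γ * δ / η := by ring
end Stab

section Smooth
variable {K : ℕ} {η C γ : ℝ} {F F' f : ℝ → ℝ} {p : (Fin K → ℝ) → Fin K → ℝ}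

lemma aux_gauss : ∀ n : ℕ, (∑ i ∈ Finset.range n, ((i:ℝ)+1)) = n*(n+1)/2 := by
  intro n
  induction n with
  | zero => simp
  | succ n IH => rw [Finset.sum_range_succ, IH]; push_cast; ring

lemma aux_smooth (hη : 0 < η) (hC : 0 < C) (hγ0 : 0 ≤ γ)
    (hFmono : StrictMono F) (hFcont : Continuous F)
    (hFbot : ∀ ε > (0:ℝ), ∃ s, F s < ε) (hFtop : ∀ ε > (0:ℝ), ∃ s, 1 - ε < F s)
    (hFderiv : ∀ s, HasDerivAt F (F' s) s)
    (hgrowth : ∀ q ∈ Ioo (0:ℝ) 1, F' (quantile F q) ≤ C * q ^ γ)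
    (hp : ∀ u, p u ∈ simplex K ∧ (∀ k, 0 < p u k) ∧
      IsMaxOn (fun q => ∑ k, u k * q k - η * ∑ k, f (q k)) (simplex K) (p u) ∧
      ∀ q ∈ simplex K,
        IsMaxOn (fun q' => ∑ k, u k * q' k - η * ∑ k, f (q' k)) (simplex K) q → q = p u)
    (hDf : ∀ s ∈ Ioo (0:ℝ) 1, HasDerivAt f (quantile F s) s)
    (u : Fin K → ℝ) (a : Fin K) {g : ℝ} (hg : g ≤ 0) :
    PhiF η f p (upd u a g)
      ≤ PhiF η f p u + g * p u a + C * (p u a) ^ γ * g^2 / (2*η) := by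
  set m : ℝ → ℝ := fun s => p (upd u a s) a with hm
  set h : ℝ → ℝ := fun s => PhiF η f p (upd u a s) with hh
  have hupd0 : upd u a 0 = u := by funext k; simp [upd]
  have hm0 : m 0 = p u a := by rw [hm]; simp only [hupd0]
  have hh0 : h 0 = PhiF η f p u := by rw [hh]; simp only [hupd0]
  have hm0pos : 0 < m 0 := by rw [hm]; exact (hp _).2.1 a
  have hcomp : ∀ s d : ℝ, upd (upd u a s) a d = upd u a (s + d) := by
    intro s d; funext k; unfold upd; split <;> ring
  have hF1 : ∀ s s' : ℝ, h s + (s' - s) * m s ≤ h s' := fun s s' =>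
    aux_phi_subgrad hp u a s s'
  have hF2 : ∀ {s s' : ℝ}, s ≤ s' → m s ≤ m s' := fun {s s'} hss =>
    aux_pmono hp u a hss
  have hF3 : ∀ s' s : ℝ, s' ≤ s → s ≤ 0 → m s - m s' ≤ C * (m 0) ^ γ * (s - s') / η := by
    intro s' s hss hs0
    have hst := aux_stab hη hC hγ0 hFmono hFcont hFbot hFtop hFderiv hgrowth hp hDf
      (upd u a s) a (δ := s - s') (by linarith)
    rw [hcomp s (-(s - s'))] at hst
    have he : s + -(s - s') = s' := by ring
    rw [he] at hst
    have hms : m s ≤ m 0 := hF2 hs0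
    have hmspos : 0 < m s := (hp _).2.1 a
    have hrp : (m s) ^ γ ≤ (m 0) ^ γ :=
      Real.rpow_le_rpow (le_of_lt hmspos) hms hγ0
    have hfac : 0 ≤ (s - s') / η := div_nonneg (by linarith) (le_of_lt hη)
    calc m s - m s' ≤ C * (m s) ^ γ * (s - s') / η := hst
      _ = C * (s - s') / η * (m s) ^ γ := by ring
      _ ≤ C * (s - s') / η * (m 0) ^ γ :=
          mul_le_mul_of_nonneg_left hrp
            (div_nonneg (mul_nonneg hC.le (by linarith)) hη.le)
      _ = C * (m 0) ^ γ * (s - s') / η := by ring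
  have hkey : ∀ n : ℕ, 0 < n →
      h g - h 0 ≤ g * m 0 + C * (m 0) ^ γ * g^2 * ((n:ℝ)+1) / (2*(n:ℝ)*η) := by
    intro n hn
    have hnR : (0:ℝ) < (n:ℝ) := by exact_mod_cast hn
    set s : ℕ → ℝ := fun i => (i:ℝ) * g / n with hs
    have htel : h g - h 0 = ∑ i ∈ Finset.range n, (h (s (i+1)) - h (s i)) := by
      rw [Finset.sum_range_sub (fun i => h (s i))]
      congr 2
      · rw [hs]; field_simp
      · rw [hs]; simp
    have hterm : ∀ i ∈ Finset.range n,
        h (s (i+1)) - h (s i)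
          ≤ (g/n) * m 0 + C * (m 0)^γ * g^2 * ((i:ℝ)+1) / ((n:ℝ)^2 * η) := by
      intro i _
      have hstep : h (s (i+1)) - h (s i) ≤ (g/n) * m (s (i+1)) := by
        have h1 := hF1 (s (i+1)) (s i)
        have hdiff : s i - s (i+1) = -(g/n) := by
          rw [hs]; push_cast; field_simp; ring
        rw [hdiff] at h1
        linarith [h1]
      have hnum : ((i:ℝ)+1) * g ≤ 0 :=
        mul_nonpos_of_nonneg_of_nonpos (by positivity) hg
      have hsle : s (i+1) ≤ 0 := by
        rw [hs]
        push_cast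
        exact div_nonpos_iff.mpr (Or.inr ⟨hnum, hnR.le⟩)
      have h3 := hF3 (s (i+1)) 0 hsle le_rfl
      have hgn : g / n ≤ 0 := div_nonpos_iff.mpr (Or.inr ⟨hg, hnR.le⟩)
      have h4 := mul_le_mul_of_nonneg_left h3 (neg_nonneg.2 hgn)
      calc h (s (i+1)) - h (s i) ≤ (g/n) * m (s (i+1)) := hstep
        _ = (g/n) * m 0 - (g/n) * (m 0 - m (s (i+1))) := by ring
        _ ≤ (g/n) * m 0 + (-(g/n)) * (C * (m 0)^γ * (0 - s (i+1)) / η) := by linarith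
        _ = (g/n) * m 0 + C * (m 0)^γ * g^2 * ((i:ℝ)+1) / ((n:ℝ)^2 * η) := by
            rw [hs]; push_cast; field_simp; ring
    calc h g - h 0 = ∑ i ∈ Finset.range n, (h (s (i+1)) - h (s i)) := htel
      _ ≤ ∑ i ∈ Finset.range n,
          ((g/n) * m 0 + C * (m 0)^γ * g^2 * ((i:ℝ)+1) / ((n:ℝ)^2 * η)) :=
        Finset.sum_le_sum hterm
      _ = (n:ℝ) * ((g/n) * m 0)
          + (C * (m 0)^γ * g^2 / ((n:ℝ)^2 * η)) * ∑ i ∈ Finset.range n, ((i:ℝ)+1) := by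
        rw [Finset.sum_add_distrib, Finset.sum_const, Finset.card_range, nsmul_eq_mul,
          Finset.mul_sum]
        congr 1
        exact Finset.sum_congr rfl fun i _ => by ring
      _ = g * m 0 + C * (m 0) ^ γ * g^2 * ((n:ℝ)+1) / (2*(n:ℝ)*η) := by
        rw [aux_gauss]; field_simp
  -- pass to the limit in n
  have hB : (0:ℝ) ≤ C * (m 0)^γ * g^2 / (2*η) := by
    have := Real.rpow_nonneg hm0pos.le γ
    positivity
  have hfin : ∀ ε > (0:ℝ), h g ≤ h 0 + g * m 0 + C * (m 0)^γ * g^2 / (2*η) + ε := by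
    intro ε hε
    set B := C * (m 0)^γ * g^2 / (2*η) with hBdef
    obtain ⟨n, hn⟩ := exists_nat_gt (B / ε)
    have hn0 : 0 < n := by
      have h0 : (0:ℝ) ≤ B / ε := div_nonneg hB hε.le
      have : (0:ℝ) < (n:ℝ) := lt_of_le_of_lt h0 hn
      exact_mod_cast this
    have hnR : (0:ℝ) < (n:ℝ) := by exact_mod_cast hn0
    have hk := hkey n hn0
    have heq : C * (m 0) ^ γ * g^2 * ((n:ℝ)+1) / (2*(n:ℝ)*η) = B + B / n := by
      rw [hBdef]; field_simp
    have hBn : B / n < ε := by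
      rw [div_lt_iff₀ hnR]
      have := (div_lt_iff₀ hε).mp hn
      linarith
    rw [heq] at hk
    linarith
  have hfinal : h g ≤ h 0 + g * m 0 + C * (m 0)^γ * g^2 / (2*η) := by
    by_contra hcon
    push_neg at hcon
    have hd : 0 < (h g - (h 0 + g * m 0 + C * (m 0)^γ * g^2 / (2*η))) / 2 := by linarith
    have := hfin _ hd
    linarith
  rw [hh0, hm0] at hfinal
  exact hfinal
end Smooth

lemma aux_powmean {K : ℕ} {γ : ℝ} (hγ1 : 1 < γ) (hγ2 : γ < 2)
    (q : Fin K → ℝ) (hpos : ∀ a, 0 < q a) (hsum : ∑ a, q a = 1) :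
    ∑ a, (q a) ^ (γ - 1) ≤ (K:ℝ) ^ ((2:ℝ) - γ) := by
  have hK0 : 0 < K := by
    by_contra hc
    push_neg at hc
    interval_cases K
    simp at hsum
  have hKR : (0:ℝ) < (K:ℝ) := by exact_mod_cast hK0
  have hconc : ConcaveOn ℝ (Ici (0:ℝ)) (fun x : ℝ => x ^ (γ - 1)) :=
    Real.concaveOn_rpow (by linarith) (by linarith)
  have hJ := hconc.le_map_sum (t := Finset.univ) (w := fun _ : Fin K => (K:ℝ)⁻¹)
    (p := q) (fun _ _ => by positivity)
    (by rw [Finset.sum_const, Finset.card_univ, Fintype.card_fin, nsmul_eq_mul]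
        field_simp)
    (fun a _ => (hpos a).le)
  have hsm : ∑ a, (K:ℝ)⁻¹ • q a = (K:ℝ)⁻¹ := by
    simp only [smul_eq_mul]
    rw [← Finset.mul_sum, hsum, mul_one]
  rw [hsm] at hJ
  simp only [smul_eq_mul] at hJ
  rw [← Finset.mul_sum] at hJ
  have hmul := mul_le_mul_of_nonneg_left hJ hKR.le
  rw [← mul_assoc, mul_inv_cancel₀ hKR.ne', one_mul] at hmul
  calc ∑ a, (q a) ^ (γ - 1) ≤ (K:ℝ) * ((K:ℝ)⁻¹) ^ (γ - 1) := hmul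
    _ = (K:ℝ)^(1:ℝ) * ((K:ℝ)^(γ-1))⁻¹ := by
        rw [Real.inv_rpow hKR.le, Real.rpow_one]
    _ = (K:ℝ)^(1:ℝ) * (K:ℝ)^(-(γ-1)) := by rw [Real.rpow_neg hKR.le]
    _ = (K:ℝ)^((1:ℝ) + -(γ-1)) := (Real.rpow_add hKR _ _).symm
    _ = (K:ℝ) ^ ((2:ℝ) - γ) := by rw [show (1:ℝ) + -(γ-1) = 2 - γ by ring]

theorem stmt17 (K : ℕ) (hK : 1 ≤ K) (F F' : ℝ → ℝ)
    -- `F` is a marginal generator with strictly positive values: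
    (hFmono : StrictMono F)
    (hFderiv : ∀ s, HasDerivAt F (F' s) s)
    (hFpos : ∀ s, 0 < F s)
    (hFbot : ∀ ε > (0:ℝ), ∃ s, F s < ε)
    (hFtop : ∀ ε > (0:ℝ), ∃ s, 1 - ε < F s)
    (hFint : IntegrableOn (quantile F) (Ioo (0:ℝ) 1))
    (hFzero : ∫ t in (0:ℝ)..1, quantile F t = 0)
    (η : ℝ) (hη : 0 < η)
    (γ C : ℝ) (hγ : γ ∈ Ioo (1:ℝ) 2) (hC : 0 < C)
    (hgrowth : ∀ q ∈ Ioo (0:ℝ) 1, F' (quantile F q) ≤ C * q ^ γ)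
    (f : ℝ → ℝ) (hf : ∀ s ∈ Icc (0:ℝ) 1, f s = ∫ t in (0:ℝ)..s, quantile F t)
    (p : (Fin K → ℝ) → (Fin K → ℝ))
    (hp : ∀ u, p u ∈ simplex K ∧ (∀ k, 0 < p u k) ∧
      IsMaxOn (fun q => ∑ k, u k * q k - η * ∑ k, f (q k)) (simplex K) (p u) ∧
      ∀ q ∈ simplex K,
        IsMaxOn (fun q' => ∑ k, u k * q' k - η * ∑ k, f (q' k)) (simplex K) q → q = p u)
    (T : ℕ) (hT : 1 ≤ T)
    (r : List (Fin K) → Fin K → ℝ) (hr : ∀ h k, r h k ∈ Icc (-1:ℝ) 0) :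
    regret K T r p ≤
      -η * K * f (1 / K) + C * T * (K : ℝ) ^ ((2:ℝ) - γ) / (2 * η) := by
  classical
  obtain ⟨hγ1, hγ2⟩ := hγ
  have hγ0 : (0:ℝ) ≤ γ := by linarith
  have hFcont : Continuous F :=
    continuous_iff_continuousAt.mpr fun s => (hFderiv s).continuousAt
  have hDf : ∀ s ∈ Ioo (0:ℝ) 1, HasDerivAt f (quantile F s) s :=
    fun s hs => aux_fderiv hFmono hFcont hFbot hFtop hFint hf hs
  have hpos : ∀ u (k : Fin K), 0 < p u k := fun u => (hp u).2.1
  have hpos0 : ∀ u (k : Fin K), 0 ≤ p u k := fun u k => (hpos u k).le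
  have hsum : ∀ u, ∑ a, p u a = 1 := fun u => (hp u).1.2
  have hne : ∀ u (a : Fin K), p u a ≠ 0 := fun u a => (hpos u a).ne'
  have hf0 : f 0 = 0 := by rw [hf 0 ⟨le_rfl, zero_le_one⟩]; simp
  have hf1 : f 1 = 0 := by rw [hf 1 ⟨zero_le_one, le_rfl⟩]; exact hFzero
  -- lower bound on Phi via basis vectors
  have hPhiLB : ∀ u (k : Fin K), u k ≤ PhiF η f p u := by
    intro u k
    have hq : (fun j => if j = k then (1:ℝ) else 0) ∈ simplex K := by
      constructor
      · intro j; dsimp only; split <;> norm_num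
      · rw [Finset.sum_ite_eq']; simp
    have hle := aux_phi_ge hp u hq
    have e1 : ∑ j, u j * (if j = k then (1:ℝ) else 0) = u k := by
      simp [mul_ite, Finset.sum_ite_eq']
    have e2 : ∑ j : Fin K, f (if j = k then (1:ℝ) else 0) = 0 := by
      apply Finset.sum_eq_zero
      intro j _
      split <;> simp [hf0, hf1]
    rw [e1, e2] at hle
    simpa using hle
  -- Phi at zero
  have hPhi0 : PhiF η f p (fun _ => 0) ≤ -η * K * f (1/K) := by
    set u0 : Fin K → ℝ := fun _ => 0 with hu0
    have heq : PhiF η f p u0 = -(η * ∑ k, f (p u0 k)) := by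
      unfold PhiF; simp [hu0]
    have hJ : (K:ℝ) * f (1/(K:ℝ)) ≤ ∑ k, f (p u0 k) := by
      rcases eq_or_lt_of_le hK with hK1 | hK2
      · -- K = 1
        subst hK1
        have h1 : p u0 0 = 1 := by
          have := hsum u0
          rwa [Fin.sum_univ_one] at this
        rw [Fin.sum_univ_one, h1, hf1]
        norm_num [hf1]
      · -- K ≥ 2
        have hKR : (0:ℝ) < (K:ℝ) := by positivity
        have hij : (⟨0, by omega⟩ : Fin K) ≠ (⟨1, by omega⟩ : Fin K) := by
          simp [Fin.ext_iff]
        have hlt1 : ∀ i, p u0 i < 1 := aux_p_lt_one hp u0 hij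
        have hconv : ConvexOn ℝ (Ioo (0:ℝ) 1) f :=
          aux_fconvex hFmono hFcont hFbot hFtop hFint hf
        have hJen := hconv.map_sum_le (t := Finset.univ)
          (w := fun _ : Fin K => (K:ℝ)⁻¹) (p := fun k => p u0 k)
          (fun _ _ => by positivity)
          (by rw [Finset.sum_const, Finset.card_univ, Fintype.card_fin, nsmul_eq_mul]
              field_simp)
          (fun k _ => ⟨hpos u0 k, hlt1 k⟩)
        have hsm : ∑ k, (K:ℝ)⁻¹ • p u0 k = (K:ℝ)⁻¹ := by
          simp only [smul_eq_mul]
          rw [← Finset.mul_sum, hsum, mul_one]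
        rw [hsm] at hJen
        simp only [smul_eq_mul] at hJen
        rw [← Finset.mul_sum] at hJen
        have hmul := mul_le_mul_of_nonneg_left hJen hKR.le
        rw [← mul_assoc, mul_inv_cancel₀ hKR.ne', one_mul] at hmul
        rw [one_div]
        exact hmul
    rw [heq]
    nlinarith [mul_le_mul_of_nonneg_left hJ hη.le]
  -- per-round step inequality
  set c : ℝ := C * (K:ℝ) ^ ((2:ℝ) - γ) / (2*η) with hc
  have hstep : ∀ h : List (Fin K),
      ∑ a : Fin K, p (uhat r p h) a
          * (PhiF η f p (uhat r p (a :: h)) - cumReward r (a :: h))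
        ≤ (PhiF η f p (uhat r p h) - cumReward r h) + c := by
    intro h
    set u := uhat r p h with hu
    have hua : ∀ a : Fin K, uhat r p (a :: h) = upd u a (r h a / p u a) := by
      intro a; funext k; simp [uhat, upd, hu]
    have hterm : ∀ a : Fin K,
        p u a * (PhiF η f p (uhat r p (a :: h)) - cumReward r (a :: h))
          ≤ p u a * (PhiF η f p u - cumReward r h)
            + C * (p u a)^(γ-1) * (r h a)^2 / (2*η) := by
      intro a
      have hsm0 : PhiF η f p (uhat r p (a :: h))
          ≤ PhiF η f p u + (r h a / p u a) * p u a
            + C * (p u a)^γ * (r h a / p u a)^2 / (2*η) := by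
        rw [hua a]
        exact aux_smooth hη hC hγ0 hFmono hFcont hFbot hFtop hFderiv hgrowth hp hDf u a
          (div_nonpos_iff.mpr (Or.inr ⟨(hr h a).2, (hpos u a).le⟩))
      have hcancel : (r h a / p u a) * p u a = r h a := div_mul_cancel₀ _ (hne u a)
      rw [hcancel] at hsm0
      have hcr : cumReward r (a :: h) = cumReward r h + r h a := rfl
      have h1 : (p u a)^γ = (p u a)^(γ-1) * p u a := by
        rw [show γ = (γ-1) + 1 by ring, Real.rpow_add_one (hne u a)]
        ring_nf
      have hpow : p u a * (C * (p u a)^γ * (r h a / p u a)^2 / (2*η))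
          = C * (p u a)^(γ-1) * (r h a)^2 / (2*η) := by
        rw [div_pow, h1]
        have hpa := hne u a
        field_simp
      calc p u a * (PhiF η f p (uhat r p (a :: h)) - cumReward r (a :: h))
          = p u a * PhiF η f p (uhat r p (a :: h))
            - p u a * (cumReward r h + r h a) := by rw [hcr]; ring
        _ ≤ p u a * (PhiF η f p u + r h a + C * (p u a)^γ * (r h a / p u a)^2 / (2*η))
            - p u a * (cumReward r h + r h a) :=
          sub_le_sub_right (mul_le_mul_of_nonneg_left hsm0 (hpos u a).le) _
        _ = p u a * (PhiF η f p u - cumReward r h)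
            + p u a * (C * (p u a)^γ * (r h a / p u a)^2 / (2*η)) := by ring
        _ = p u a * (PhiF η f p u - cumReward r h)
            + C * (p u a)^(γ-1) * (r h a)^2 / (2*η) := by rw [hpow]
    calc ∑ a : Fin K, p u a * (PhiF η f p (uhat r p (a :: h)) - cumReward r (a :: h))
        ≤ ∑ a : Fin K, (p u a * (PhiF η f p u - cumReward r h)
            + C * (p u a)^(γ-1) * (r h a)^2 / (2*η)) :=
          Finset.sum_le_sum fun a _ => hterm a
      _ = (PhiF η f p u - cumReward r h)
          + ∑ a : Fin K, C * (p u a)^(γ-1) * (r h a)^2 / (2*η) := by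
          rw [Finset.sum_add_distrib, ← Finset.sum_mul, hsum, one_mul]
      _ ≤ (PhiF η f p u - cumReward r h) + c := by
          have hsq : ∀ a : Fin K, (r h a)^2 ≤ 1 := by
            intro a
            nlinarith [(hr h a).1, (hr h a).2]
          have hstep1 : ∀ a : Fin K,
              C * (p u a)^(γ-1) * (r h a)^2 / (2*η) ≤ C * (p u a)^(γ-1) / (2*η) := by
            intro a
            have hpa : (0:ℝ) ≤ (p u a)^(γ-1) := Real.rpow_nonneg (hpos0 u a) _
            have h2 : C * (p u a)^(γ-1) * (r h a)^2 ≤ C * (p u a)^(γ-1) := by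
              nlinarith [hsq a, mul_nonneg hC.le hpa, sq_nonneg (r h a)]
            have h3 : (0:ℝ) < 2*η := by positivity
            exact div_le_div_of_nonneg_right h2 h3.le
          have hpm := aux_powmean hγ1 hγ2 (fun a => p u a) (hpos u) (hsum u)
          have hb : ∑ a : Fin K, C * (p u a)^(γ-1) * (r h a)^2 / (2*η) ≤ c := by
            calc ∑ a : Fin K, C * (p u a)^(γ-1) * (r h a)^2 / (2*η)
                ≤ ∑ a : Fin K, C * (p u a)^(γ-1) / (2*η) :=
                  Finset.sum_le_sum fun a _ => hstep1 a
              _ = (C/(2*η)) * ∑ a : Fin K, (p u a)^(γ-1) := by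
                  rw [Finset.mul_sum]
                  exact Finset.sum_congr rfl fun a _ => by ring
              _ ≤ (C/(2*η)) * (K:ℝ) ^ ((2:ℝ) - γ) :=
                  mul_le_mul_of_nonneg_left hpm (by positivity)
              _ = c := by rw [hc]; ring
          linarith
  -- assemble expectations
  have hexp := aux_exp_bound r p (PhiF η f p) c hpos0 hsum hstep T
  have hSR : ∀ k : Fin K,
      (∑ f0 : Fin T → Fin K,
        histProb r p (List.ofFn f0).reverse * cumArm r k (List.ofFn f0).reverse)
      ≤ PhiF η f p (fun _ => 0) + T * c
        + ∑ f0 : Fin T → Fin K,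
            histProb r p (List.ofFn f0).reverse * cumReward r (List.ofFn f0).reverse := by
    intro k
    rw [aux_unbiased r p hsum hne k T]
    have h1 : ∑ f0 : Fin T → Fin K,
        histProb r p (List.ofFn f0).reverse * uhat r p (List.ofFn f0).reverse k
      ≤ ∑ f0 : Fin T → Fin K,
        histProb r p (List.ofFn f0).reverse * PhiF η f p (uhat r p (List.ofFn f0).reverse) :=
      Finset.sum_le_sum fun f0 _ =>
        mul_le_mul_of_nonneg_left (hPhiLB _ k) (aux_histProb_nonneg r p hpos0 _)
    have h2 : ∑ f0 : Fin T → Fin K,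
        histProb r p (List.ofFn f0).reverse * PhiF η f p (uhat r p (List.ofFn f0).reverse)
      = (∑ f0 : Fin T → Fin K,
          histProb r p (List.ofFn f0).reverse
            * (PhiF η f p (uhat r p (List.ofFn f0).reverse)
                - cumReward r (List.ofFn f0).reverse))
        + ∑ f0 : Fin T → Fin K,
            histProb r p (List.ofFn f0).reverse * cumReward r (List.ofFn f0).reverse := by
      rw [← Finset.sum_add_distrib]
      exact Finset.sum_congr rfl fun f0 _ => by ring
    rw [h2] at h1
    linarith
  haveI : Nonempty (Fin K) := ⟨⟨0, hK⟩⟩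
  have hreg : regret K T r p ≤ PhiF η f p (fun _ => 0) + T * c := by
    unfold regret
    rw [sub_le_iff_le_add]
    apply ciSup_le
    intro k
    have := hSR k
    linarith
  have hfinal : PhiF η f p (fun _ => 0) + T * c
      ≤ -η * K * f (1 / K) + C * T * (K : ℝ) ^ ((2:ℝ) - γ) / (2 * η) := by
    have : (T:ℝ) * c = C * T * (K : ℝ) ^ ((2:ℝ) - γ) / (2 * η) := by
      rw [hc]; ring
    linarith [hPhi0]
  linarith
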